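/- Let n be a natural number and let I be a Lie ideal of the Lie algebra gl(n, ℝ) of all real n × n matrices with the commutator bracket ⁅X, Y⁆ = XY − YX. If every element X of I is ad-nilpotent, i.e. the adjoint endomorphism ad X : gl(n, ℝ) → gl(n, ℝ), Y ↦ ⁅X, Y⁆, is nilpotent, then every element of I is a scalar matrix: for each X ∈ I there exists c ∈ ℝ with X = c • 1. -/

import Mathlib

attribute [local instance 100] LieRing.ofAssociativeRing

open Matrix

namespace ScalarIdealAux

variable {n : ℕ}

/-- Frobenius pairing on real matrices. -/
noncomputable def ip (A B : Matrix (Fin n) (Fin n) ℝ) : ℝ := (Aᵀ * B).trace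

lemma ip_self_eq_zero {A : Matrix (Fin n) (Fin n) ℝ} (hA : ip A A = 0) : A = 0 := by
  have hsum : ∑ i, ∑ j, (A j i) ^ 2 = 0 := by
    rw [← hA]; unfold ip
    rw [Matrix.trace]
    simp only [Matrix.diag, Matrix.mul_apply, Matrix.transpose_apply, sq]
  ext i j
  have h1 : ∀ k ∈ (Finset.univ : Finset (Fin n)), ∑ l, (A l k) ^ 2 = 0 := by
    intro k _
    have := (Finset.sum_eq_zero_iff_of_nonneg (fun k _ => Finset.sum_nonneg
      (fun l _ => sq_nonneg (A l k)))).mp hsum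
    exact this k (Finset.mem_univ k)
  have h2 := (Finset.sum_eq_zero_iff_of_nonneg (fun l _ => sq_nonneg (A l j))).mp
    (h1 j (Finset.mem_univ j)) i (Finset.mem_univ i)
  have := sq_eq_zero_iff.mp h2
  simpa using this

lemma ip_adj (X A B : Matrix (Fin n) (Fin n) ℝ) : ip ⁅X, A⁆ B = ip A ⁅Xᵀ, B⁆ := by
  simp only [Ring.lie_def, ip, Matrix.transpose_sub, Matrix.transpose_mul, Matrix.sub_mul,
    Matrix.mul_sub, Matrix.trace_sub, Matrix.mul_assoc]
  rw [Matrix.trace_mul_comm (Xᵀ) (Aᵀ * B)]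
  rw [Matrix.mul_assoc]

/-- A self-adjoint nilpotent endomorphism of matrix space is zero. -/
lemma selfadj_nilpotent_eq_zero (f : Module.End ℝ (Matrix (Fin n) (Fin n) ℝ))
    (hsa : ∀ A B, ip (f A) B = ip A (f B)) (hn : IsNilpotent f) : f = 0 := by
  obtain ⟨m, hm⟩ := hn
  have key : ∀ k, ∀ A, (f ^ (k + 1)) A = 0 → f A = 0 := by
    intro k
    induction k with
    | zero => intro A hA; simpa using hA
    | succ k ih =>
      intro A hA
      apply ih
      apply ip_self_eq_zero
      have e1 : (f ^ (k + 1)) A = f ((f ^ k) A) := by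
        rw [pow_succ']; rfl
      have e2 : f ((f ^ (k + 1)) A) = (f ^ (k + 2)) A := by
        rw [show (f ^ (k + 2)) = f * f ^ (k + 1) from pow_succ' f (k + 1)]; rfl
      calc ip ((f ^ (k + 1)) A) ((f ^ (k + 1)) A)
          = ip (f ((f ^ k) A)) ((f ^ (k + 1)) A) := by rw [e1]
        _ = ip ((f ^ k) A) (f ((f ^ (k + 1)) A)) := hsa _ _
        _ = ip ((f ^ k) A) ((f ^ (k + 2)) A) := by rw [e2]
        _ = 0 := by rw [hA]; simp [ip]
  apply LinearMap.ext; intro A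
  rw [LinearMap.zero_apply]
  apply key m
  have : (f ^ (m + 1)) = 0 := by rw [pow_succ, hm, zero_mul]
  rw [this]; rfl

end ScalarIdealAux

open ScalarIdealAux in
/-- Let `I` be a Lie ideal of the Lie algebra `gl(n, ℝ)` of real `n × n`
matrices with the commutator bracket.  If every `X ∈ I` is ad-nilpotent, then every element
of `I` is a scalar matrix. -/
theorem lieIdeal_of_ad_nilpotent_elements_is_scalar
    (n : ℕ) (I : LieIdeal ℝ (Matrix (Fin n) (Fin n) ℝ))
    (h : ∀ X ∈ I, IsNilpotent (LieAlgebra.ad ℝ (Matrix (Fin n) (Fin n) ℝ) X)) :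
    ∀ X ∈ I, ∃ c : ℝ, X = c • (1 : Matrix (Fin n) (Fin n) ℝ) := by
  set gl := Matrix (Fin n) (Fin n) ℝ
  rcases Nat.eq_zero_or_pos n with hn0 | hn
  · subst hn0
    exact fun X _ => ⟨0, by ext i j; exact i.elim0⟩
  -- a matrix commuting with everything is scalar
  have central_scalar : ∀ X : gl, (∀ A : gl, X * A = A * X) → ∃ c : ℝ, X = c • 1 := by
    intro X hX
    obtain ⟨c, hc⟩ := Matrix.mem_range_scalar_of_commute_single
      (M := X) (fun i j _ => ((hX _).symm : Commute _ X))
    exact ⟨c, by rw [← hc, Matrix.scalar_apply, ← Matrix.smul_one_eq_diagonal]⟩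
  -- symmetric traceless elements of I vanish
  have key : ∀ Z : gl, Z ∈ I → Zᵀ = Z → Z.trace = 0 → Z = 0 := by
    intro Z hZ hsym htr
    have had : LieAlgebra.ad ℝ gl Z = 0 := by
      apply selfadj_nilpotent_eq_zero _ _ (h Z hZ)
      intro A B
      rw [LieAlgebra.ad_apply, LieAlgebra.ad_apply, ip_adj, hsym]
    have hcomm : ∀ A : gl, Z * A = A * Z := by
      intro A
      have : (LieAlgebra.ad ℝ gl Z) A = 0 := by rw [had]; rfl
      rw [LieAlgebra.ad_apply, Ring.lie_def] at this
      exact sub_eq_zero.mp this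
    obtain ⟨c, hc⟩ := central_scalar Z hcomm
    have : Z.trace = c * n := by
      rw [hc, Matrix.trace_smul, Matrix.trace_one]
      simp [smul_eq_mul]
    rw [htr] at this
    have hc0 : c = 0 := by
      have : c * n = 0 := this.symm
      rcases mul_eq_zero.mp this with h1 | h1
      · exact h1
      · exact absurd h1 (by positivity)
    rw [hc, hc0, zero_smul]
  intro X hX
  -- X is normal
  have hZmem : ⁅Xᵀ, X⁆ ∈ I := LieSubmodule.lie_mem I hX
  have hZsym : (⁅Xᵀ, X⁆ : gl)ᵀ = ⁅Xᵀ, X⁆ := by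
    simp [Ring.lie_def, Matrix.transpose_sub, Matrix.transpose_mul]
  have hZtr : (⁅Xᵀ, X⁆ : gl).trace = 0 := by
    rw [Ring.lie_def, Matrix.trace_sub, Matrix.trace_mul_comm, sub_self]
  have hnormal : ⁅Xᵀ, X⁆ = (0 : gl) := key _ hZmem hZsym hZtr
  -- ad X and ad Xᵀ commute
  set f := LieAlgebra.ad ℝ gl X with hf
  set g := LieAlgebra.ad ℝ gl Xᵀ with hg
  have hcomm : Commute g f := by
    have := (LieAlgebra.ad ℝ gl).map_lie Xᵀ X
    rw [hnormal, map_zero, Ring.lie_def] at this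
    exact sub_eq_zero.mp this.symm
  have hfn : IsNilpotent f := h X hX
  obtain ⟨m, hm⟩ := hfn
  have hgf0 : (g * f : Module.End ℝ gl) = 0 := by
    apply selfadj_nilpotent_eq_zero
    · intro A B
      have e1 : (g * f) A = g (f A) := rfl
      have e2 : (g * f) B = g (f B) := rfl
      rw [e1, e2, hf, hg, LieAlgebra.ad_apply, LieAlgebra.ad_apply,
        LieAlgebra.ad_apply, LieAlgebra.ad_apply]
      rw [ip_adj Xᵀ, Matrix.transpose_transpose, ← ip_adj X]
    · exact ⟨m, by rw [hcomm.mul_pow, hm, mul_zero]⟩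
  have hfA : ∀ A : gl, f A = 0 := by
    intro A
    apply ip_self_eq_zero
    have : ip ((g * f) A) A = ip (f A) (f A) := by
      have e1 : (g * f) A = g (f A) := rfl
      rw [e1, hg, hf, LieAlgebra.ad_apply, LieAlgebra.ad_apply, ip_adj,
        Matrix.transpose_transpose, ← LieAlgebra.ad_apply ℝ]
    rw [hgf0] at this
    simpa [ip] using this.symm
  apply central_scalar
  intro A
  have := hfA A
  rw [hf, LieAlgebra.ad_apply, Ring.lie_def] at this
  exact sub_eq_zero.mp this
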